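/- There exists a constant c > 0 such that for every finite set P of n points in the plane in general position and every orientation θ, the number of nondegenerate empty squares in orientation θ having at least three pinned sides is at most c·n. -/
import Mathlib


open Real Set

/-- The four side labels of a square. -/
inductive SqSide : Type
  | top
  | right
  | bottom
  | left
  deriving DecidableEq

/-- A (solid, closed) square in the plane, given by its center, its radius `r`
(half the side length) and its orientation `θ`. -/
structure Square : Type where
  center : ℝ × ℝ
  r : ℝ
  θ : ℝ

namespace Square

/-- The local `x`-coordinate of a point in the rotated frame of the square. -/
noncomputable def lx (S : Square) (p : ℝ × ℝ) : ℝ :=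
  (p.1 - S.center.1) * Real.cos S.θ + (p.2 - S.center.2) * Real.sin S.θ

/-- The local `y`-coordinate of a point in the rotated frame of the square. -/
noncomputable def ly (S : Square) (p : ℝ × ℝ) : ℝ :=
  -(p.1 - S.center.1) * Real.sin S.θ + (p.2 - S.center.2) * Real.cos S.θ

/-- A valid parametrization: nonnegative radius and orientation in `[0, π/2)`.
Every geometric square (with sides parallel to the directions `θ` and `θ + π/2`
for some `θ`) has such a parametrization, which is unique when `0 < r`. -/
def Valid (S : Square) : Prop :=
  0 ≤ S.r ∧ 0 ≤ S.θ ∧ S.θ < Real.pi / 2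

/-- Membership in the closed solid square. -/
def Mem (S : Square) (p : ℝ × ℝ) : Prop :=
  |S.lx p| ≤ S.r ∧ |S.ly p| ≤ S.r

/-- The square as a subset of the plane. -/
def toSet (S : Square) : Set (ℝ × ℝ) :=
  {p | S.Mem p}

/-- Membership in the interior of the square. -/
def InteriorMem (S : Square) (p : ℝ × ℝ) : Prop :=
  |S.lx p| < S.r ∧ |S.ly p| < S.r

/-- `p` lies on the closed side of `S` labeled `a` (sides include their endpoints). -/
def OnSide (S : Square) (a : SqSide) (p : ℝ × ℝ) : Prop :=
  match a with
  | SqSide.top    => S.ly p = S.r ∧ |S.lx p| ≤ S.r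
  | SqSide.bottom => S.ly p = -S.r ∧ |S.lx p| ≤ S.r
  | SqSide.right  => S.lx p = S.r ∧ |S.ly p| ≤ S.r
  | SqSide.left   => S.lx p = -S.r ∧ |S.ly p| ≤ S.r

/-- `p` lies on the boundary of `S`. -/
def OnBoundary (S : Square) (p : ℝ × ℝ) : Prop :=
  ∃ a : SqSide, S.OnSide a p

/-- `S` is a square in orientation `φ`, i.e. its sides are parallel to the
directions `φ` and `φ + π/2` (orientations are taken modulo `π/2`). -/
def InOrientation (S : Square) (φ : ℝ) : Prop :=
  ∃ k : ℤ, φ - S.θ = (k : ℝ) * (Real.pi / 2)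

/-- The opposite side label. -/
def _root_.SqSide.opp : SqSide → SqSide
  | SqSide.top => SqSide.bottom
  | SqSide.bottom => SqSide.top
  | SqSide.left => SqSide.right
  | SqSide.right => SqSide.left

end Square

/-- The set of contact pairs of the square `S` with respect to the point set `P`:
pairs `(p, a)` with `p ∈ P` lying on the side of `S` labeled `a`. -/
def contactPairs (P : Finset (ℝ × ℝ)) (S : Square) : Set ((ℝ × ℝ) × SqSide) :=
  {pa | pa.1 ∈ P ∧ S.OnSide pa.2 pa.1}

/-- The set of contact points of `S`: points of `P` on the boundary of `S`. -/
def contactPoints (P : Finset (ℝ × ℝ)) (S : Square) : Set (ℝ × ℝ) :=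
  {p | p ∈ P ∧ S.OnBoundary p}

/-- `S` is an empty square among `P`: a (validly parametrized) square whose
interior contains no point of `P`. -/
def IsEmptySquare (P : Finset (ℝ × ℝ)) (S : Square) : Prop :=
  S.Valid ∧ ∀ p ∈ P, ¬ S.InteriorMem p

/-- `P` is in general position: no square in any orientation has five or more
contact pairs among `P`. -/
def GenPos (P : Finset (ℝ × ℝ)) : Prop :=
  ∀ S : Square, S.Valid → (contactPairs P S).ncard ≤ 4

/-- A `4`-square: an empty square with exactly four contact pairs. -/
def Is4Square (P : Finset (ℝ × ℝ)) (S : Square) : Prop :=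
  IsEmptySquare P S ∧ (contactPairs P S).ncard = 4

/-- A nontrivial `4`-square: a `4`-square which is not a degenerate
single-point square (i.e. it has positive radius). -/
def IsNontrivial4Square (P : Finset (ℝ × ℝ)) (S : Square) : Prop :=
  Is4Square P S ∧ 0 < S.r

/-- A `(4,k)`-square: a `4`-square with exactly `k` contact points. -/
def Is4kSquare (P : Finset (ℝ × ℝ)) (k : ℕ) (S : Square) : Prop :=
  Is4Square P S ∧ (contactPoints P S).ncard = k

/-- `S` is stapled: some side of `S` contains two distinct points of `P`. -/
def IsStapled (P : Finset (ℝ × ℝ)) (S : Square) : Prop :=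
  ∃ a : SqSide, ∃ p ∈ P, ∃ q ∈ P, p ≠ q ∧ S.OnSide a p ∧ S.OnSide a q


open Finset

namespace AbsSq

open scoped Classical

def onL (a c s : ℝ) (q : ℝ × ℝ) : Prop := q.1 = a ∧ c ≤ q.2 ∧ q.2 ≤ c + s
def onR (a c s : ℝ) (q : ℝ × ℝ) : Prop := q.1 = a + s ∧ c ≤ q.2 ∧ q.2 ≤ c + s
def onB (a c s : ℝ) (q : ℝ × ℝ) : Prop := q.2 = c ∧ a ≤ q.1 ∧ q.1 ≤ a + s
def onT (a c s : ℝ) (q : ℝ × ℝ) : Prop := q.2 = c + s ∧ a ≤ q.1 ∧ q.1 ≤ a + s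
def intr (a c s : ℝ) (q : ℝ × ℝ) : Prop :=
  a < q.1 ∧ q.1 < a + s ∧ c < q.2 ∧ q.2 < c + s

noncomputable def cp (Q : Finset (ℝ × ℝ)) (a c s : ℝ) : ℕ :=
  (Q.filter (onL a c s)).card + (Q.filter (onR a c s)).card +
    (Q.filter (onB a c s)).card + (Q.filter (onT a c s)).card

/-- points in the closed square but not the interior lie on a side -/
lemma boundary_of_closed {a c s : ℝ} {q : ℝ × ℝ}
    (h1 : a ≤ q.1) (h2 : q.1 ≤ a + s) (h3 : c ≤ q.2) (h4 : q.2 ≤ c + s)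
    (h : ¬ intr a c s q) :
    onL a c s q ∨ onR a c s q ∨ onB a c s q ∨ onT a c s q := by
  unfold intr at h
  push_neg at h
  rcases h1.lt_or_eq with h1' | h1'
  · rcases h2.lt_or_eq with h2' | h2'
    · rcases h3.lt_or_eq with h3' | h3'
      · rcases h4.lt_or_eq with h4' | h4'
        · exact absurd h4' (not_lt.mpr (h h1' h2' h3'))
        · exact Or.inr (Or.inr (Or.inr ⟨h4', h1, h2⟩))
      · exact Or.inr (Or.inr (Or.inl ⟨h3'.symm, h1, h2⟩))
    · exact Or.inr (Or.inl ⟨h2', h3, h4⟩)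
  · exact Or.inl ⟨h1'.symm, h3, h4⟩

lemma card_boundary_le {Q : Finset (ℝ × ℝ)} {a c s : ℝ} :
    (Q.filter (fun q => onL a c s q ∨ onR a c s q ∨ onB a c s q ∨ onT a c s q)).card
      ≤ cp Q a c s := by
  unfold cp
  rw [filter_or, filter_or, filter_or]
  refine (Finset.card_union_le _ _).trans ?_
  have := Finset.card_union_le (Q.filter (onR a c s))
    ((Q.filter (onB a c s)) ∪ (Q.filter (onT a c s)))
  have h2 := Finset.card_union_le (Q.filter (onB a c s)) (Q.filter (onT a c s))
  omega

end AbsSq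

namespace AbsSq

variable {Q : Finset (ℝ × ℝ)} {a m : ℝ} {F : Finset (ℝ × ℝ)}

/-- hypothesis bundle: each `x = (c, s) ∈ F` encodes the square `[a, a+s] × [c, c+s]`,
which is nondegenerate, contains `m` in its vertical extent, is empty, and has
top and bottom pinned. -/
def Conf (Q : Finset (ℝ × ℝ)) (a m : ℝ) (F : Finset (ℝ × ℝ)) : Prop :=
  ∀ x ∈ F, 0 < x.2 ∧ x.1 ≤ m ∧ m ≤ x.1 + x.2 ∧
    (∀ q ∈ Q, ¬ intr a x.1 x.2 q) ∧
    (∃ t ∈ Q, onT a x.1 x.2 t) ∧ (∃ b ∈ Q, onB a x.1 x.2 b)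

lemma sameTop (hGP : ∀ a c s : ℝ, 0 ≤ s → cp Q a c s ≤ 4)
    (hF : Conf Q a m F) (w : ℝ) :
    (F.filter (fun x => x.1 + x.2 = w)).card ≤ 3 := by
  classical
  set G := F.filter (fun x => x.1 + x.2 = w) with hG
  rcases G.eq_empty_or_nonempty with h | hne
  · simp [h]
  obtain ⟨y, hyG, hymax⟩ := G.exists_max_image (fun x => x.2) hne
  have hyF : y ∈ F := (Finset.mem_filter.mp hyG).1
  have hyw : y.1 + y.2 = w := (Finset.mem_filter.mp hyG).2
  obtain ⟨hys, hym1, hym2, hyemp, ⟨t, htQ, htT⟩, ⟨b, hbQ, hbB⟩⟩ := hF y hyF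
  -- the bottom-pin map
  set φ : ℝ × ℝ → ℝ × ℝ := fun x =>
    if h : x ∈ F then ((hF x h).2.2.2.2.2).choose else (0, 0) with hφ
  have hmaps : ∀ x ∈ G.erase y, φ x ∈ Q.filter (onL a y.1 y.2) := by
    intro x hx
    have hxy : x ≠ y := (Finset.mem_erase.mp hx).1
    have hxG : x ∈ G := (Finset.mem_erase.mp hx).2
    have hxF : x ∈ F := (Finset.mem_filter.mp hxG).1
    have hxw : x.1 + x.2 = w := (Finset.mem_filter.mp hxG).2
    obtain ⟨hxs, hxm1, hxm2, hxemp, _, hxb⟩ := hF x hxF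
    have hs2 : x.2 ≤ y.2 := hymax x hxG
    have hs2' : x.2 < y.2 := by
      rcases hs2.lt_or_eq with h | h
      · exact h
      · exact absurd (Prod.ext (by linarith) h) hxy
    have hc : y.1 < x.1 := by linarith
    simp only [hφ, dif_pos hxF]
    obtain ⟨hbQ', hbB'⟩ := ((hF x hxF).2.2.2.2.2).choose_spec
    set bx := ((hF x hxF).2.2.2.2.2).choose
    obtain ⟨hb1, hb2, hb3⟩ := hbB'
    -- bx is in the closed y-square, not interior, and only the left side is possible
    have hcl1 : a ≤ bx.1 := hb2
    have hcl2 : bx.1 ≤ a + y.2 := by linarith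
    have hcl3 : y.1 ≤ bx.2 := by rw [hb1]; linarith
    have hcl4 : bx.2 ≤ y.1 + y.2 := by rw [hb1]; linarith
    have hni := hyemp bx hbQ'
    rcases boundary_of_closed hcl1 hcl2 hcl3 hcl4 hni with h | h | h | h
    · exact Finset.mem_filter.mpr ⟨hbQ', h⟩
    · exfalso; have := h.1; linarith
    · exfalso; have := h.1; rw [hb1] at this; linarith
    · exfalso; have := h.1; rw [hb1] at this; linarith
  have hinj : Set.InjOn φ ↑(G.erase y) := by
    intro x hx x' hx' hee
    have hxG : x ∈ G := (Finset.mem_erase.mp hx).2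
    have hxG' : x' ∈ G := (Finset.mem_erase.mp hx').2
    have hxF : x ∈ F := (Finset.mem_filter.mp hxG).1
    have hxF' : x' ∈ F := (Finset.mem_filter.mp hxG').1
    have hxw : x.1 + x.2 = w := (Finset.mem_filter.mp hxG).2
    have hxw' : x'.1 + x'.2 = w := (Finset.mem_filter.mp hxG').2
    have e1 : (φ x).2 = x.1 := by
      simp only [hφ, dif_pos hxF]
      exact ((hF x hxF).2.2.2.2.2).choose_spec.2.1
    have e2 : (φ x').2 = x'.1 := by
      simp only [hφ, dif_pos hxF']
      exact ((hF x' hxF').2.2.2.2.2).choose_spec.2.1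
    have : x.1 = x'.1 := by rw [← e1, ← e2, hee]
    exact Prod.ext this (by linarith)
  have h1 : (G.erase y).card ≤ (Q.filter (onL a y.1 y.2)).card :=
    Finset.card_le_card_of_injOn φ hmaps hinj
  have hcp := hGP a y.1 y.2 hys.le
  unfold cp at hcp
  have hT1 : 0 < (Q.filter (onT a y.1 y.2)).card :=
    Finset.card_pos.mpr ⟨t, Finset.mem_filter.mpr ⟨htQ, htT⟩⟩
  have hB1 : 0 < (Q.filter (onB a y.1 y.2)).card :=
    Finset.card_pos.mpr ⟨b, Finset.mem_filter.mpr ⟨hbQ, hbB⟩⟩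
  have h2 := Finset.card_erase_of_mem hyG
  have h3 := Finset.card_pos.mpr hne
  omega

lemma sameBot (hGP : ∀ a c s : ℝ, 0 ≤ s → cp Q a c s ≤ 4)
    (hF : Conf Q a m F) (w : ℝ) :
    (F.filter (fun x => x.1 = w)).card ≤ 3 := by
  classical
  set G := F.filter (fun x => x.1 = w) with hG
  rcases G.eq_empty_or_nonempty with h | hne
  · simp [h]
  obtain ⟨y, hyG, hymax⟩ := G.exists_max_image (fun x => x.2) hne
  have hyF : y ∈ F := (Finset.mem_filter.mp hyG).1
  have hyw : y.1 = w := (Finset.mem_filter.mp hyG).2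
  obtain ⟨hys, hym1, hym2, hyemp, ⟨t, htQ, htT⟩, ⟨b, hbQ, hbB⟩⟩ := hF y hyF
  -- the top-pin map
  set φ : ℝ × ℝ → ℝ × ℝ := fun x =>
    if h : x ∈ F then ((hF x h).2.2.2.2.1).choose else (0, 0) with hφ
  have hmaps : ∀ x ∈ G.erase y, φ x ∈ Q.filter (onL a y.1 y.2) := by
    intro x hx
    have hxy : x ≠ y := (Finset.mem_erase.mp hx).1
    have hxG : x ∈ G := (Finset.mem_erase.mp hx).2
    have hxF : x ∈ F := (Finset.mem_filter.mp hxG).1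
    have hxw : x.1 = w := (Finset.mem_filter.mp hxG).2
    obtain ⟨hxs, hxm1, hxm2, hxemp, hxt, _⟩ := hF x hxF
    have hs2 : x.2 ≤ y.2 := hymax x hxG
    have hs2' : x.2 < y.2 := by
      rcases hs2.lt_or_eq with h | h
      · exact h
      · exact absurd (Prod.ext (by rw [hxw, hyw]) h) hxy
    simp only [hφ, dif_pos hxF]
    obtain ⟨htQ', htT'⟩ := ((hF x hxF).2.2.2.2.1).choose_spec
    set tx := ((hF x hxF).2.2.2.2.1).choose
    obtain ⟨ht1, ht2, ht3⟩ := htT'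
    have hcl1 : a ≤ tx.1 := ht2
    have hcl2 : tx.1 ≤ a + y.2 := by linarith
    have hcl3 : y.1 ≤ tx.2 := by rw [ht1, hxw, ← hyw]; linarith
    have hcl4 : tx.2 ≤ y.1 + y.2 := by rw [ht1, hxw, ← hyw]; linarith
    have hni := hyemp tx htQ'
    rcases boundary_of_closed hcl1 hcl2 hcl3 hcl4 hni with h | h | h | h
    · exact Finset.mem_filter.mpr ⟨htQ', h⟩
    · exfalso; have := h.1; linarith
    · exfalso; have := h.1; rw [ht1, hxw, ← hyw] at this; linarith
    · exfalso; have := h.1; rw [ht1, hxw, ← hyw] at this; linarith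
  have hinj : Set.InjOn φ ↑(G.erase y) := by
    intro x hx x' hx' hee
    have hxG : x ∈ G := (Finset.mem_erase.mp hx).2
    have hxG' : x' ∈ G := (Finset.mem_erase.mp hx').2
    have hxF : x ∈ F := (Finset.mem_filter.mp hxG).1
    have hxF' : x' ∈ F := (Finset.mem_filter.mp hxG').1
    have hxw : x.1 = w := (Finset.mem_filter.mp hxG).2
    have hxw' : x'.1 = w := (Finset.mem_filter.mp hxG').2
    have e1 : (φ x).2 = x.1 + x.2 := by
      simp only [hφ, dif_pos hxF]
      exact ((hF x hxF).2.2.2.2.1).choose_spec.2.1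
    have e2 : (φ x').2 = x'.1 + x'.2 := by
      simp only [hφ, dif_pos hxF']
      exact ((hF x' hxF').2.2.2.2.1).choose_spec.2.1
    have : x.1 + x.2 = x'.1 + x'.2 := by rw [← e1, ← e2, hee]
    exact Prod.ext (by rw [hxw, hxw']) (by rw [hxw, hxw'] at this; linarith)
  have h1 : (G.erase y).card ≤ (Q.filter (onL a y.1 y.2)).card :=
    Finset.card_le_card_of_injOn φ hmaps hinj
  have hcp := hGP a y.1 y.2 hys.le
  unfold cp at hcp
  have hT1 : 0 < (Q.filter (onT a y.1 y.2)).card :=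
    Finset.card_pos.mpr ⟨t, Finset.mem_filter.mpr ⟨htQ, htT⟩⟩
  have hB1 : 0 < (Q.filter (onB a y.1 y.2)).card :=
    Finset.card_pos.mpr ⟨b, Finset.mem_filter.mpr ⟨hbQ, hbB⟩⟩
  have h2 := Finset.card_erase_of_mem hyG
  have h3 := Finset.card_pos.mpr hne
  omega

/-- Core lemma: at most 25 empty top&bottom-pinned squares share a left side
line `u = a` with `m` in all their vertical extents. -/
lemma coreL (hGP : ∀ a c s : ℝ, 0 ≤ s → cp Q a c s ≤ 4)
    (hF : Conf Q a m F) : F.card ≤ 25 := by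
  classical
  rcases F.eq_empty_or_nonempty with rfl | hne
  · simp
  obtain ⟨y, hyF, hymax⟩ := F.exists_max_image (fun x => x.2) hne
  obtain ⟨hys, hym1, hym2, hyemp, _, _⟩ := hF y hyF
  set Z := Q.filter (fun q => onL a y.1 y.2 q ∨ onR a y.1 y.2 q ∨
      onB a y.1 y.2 q ∨ onT a y.1 y.2 q) with hZ
  have hZ4 : Z.card ≤ 4 := card_boundary_le.trans (hGP a y.1 y.2 hys.le)
  have step2 : ∀ x ∈ F, ∃ z ∈ Z, x.1 = z.2 ∨ x.1 + x.2 = z.2 := by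
    intro x hxF
    obtain ⟨hxs, hxm1, hxm2, hxemp, ⟨t, htQ, ⟨ht1, ht2, ht3⟩⟩, ⟨b, hbQ, ⟨hb1, hb2, hb3⟩⟩⟩ :=
      hF x hxF
    have hs2 : x.2 ≤ y.2 := hymax x hxF
    by_cases hd : x.1 + x.2 ≤ y.1 + y.2
    · -- use the top pin of x
      have hcl1 : a ≤ t.1 := ht2
      have hcl2 : t.1 ≤ a + y.2 := by linarith
      have hcl3 : y.1 ≤ t.2 := by rw [ht1]; linarith
      have hcl4 : t.2 ≤ y.1 + y.2 := by rw [ht1]; linarith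
      have hbd := boundary_of_closed hcl1 hcl2 hcl3 hcl4 (hyemp t htQ)
      exact ⟨t, Finset.mem_filter.mpr ⟨htQ, hbd⟩, Or.inr ht1.symm⟩
    · -- use the bottom pin of x
      push_neg at hd
      have hcl1 : a ≤ b.1 := hb2
      have hcl2 : b.1 ≤ a + y.2 := by linarith
      have hcl3 : y.1 ≤ b.2 := by rw [hb1]; linarith
      have hcl4 : b.2 ≤ y.1 + y.2 := by rw [hb1]; linarith
      have hbd := boundary_of_closed hcl1 hcl2 hcl3 hcl4 (hyemp b hbQ)
      exact ⟨b, Finset.mem_filter.mpr ⟨hbQ, hbd⟩, Or.inl hb1.symm⟩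
  have hsub : F ⊆ Z.biUnion (fun z => F.filter (fun x => x.1 = z.2 ∨ x.1 + x.2 = z.2)) := by
    intro x hx
    obtain ⟨z, hzZ, hz⟩ := step2 x hx
    exact Finset.mem_biUnion.mpr ⟨z, hzZ, Finset.mem_filter.mpr ⟨hx, hz⟩⟩
  calc F.card ≤ (Z.biUnion (fun z => F.filter (fun x => x.1 = z.2 ∨ x.1 + x.2 = z.2))).card :=
        Finset.card_le_card hsub
    _ ≤ ∑ z ∈ Z, (F.filter (fun x => x.1 = z.2 ∨ x.1 + x.2 = z.2)).card :=
        Finset.card_biUnion_le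
    _ ≤ ∑ _z ∈ Z, 6 := by
        refine Finset.sum_le_sum ?_
        intro z _
        rw [Finset.filter_or]
        refine (Finset.card_union_le _ _).trans ?_
        have := sameBot hGP hF z.2
        have := sameTop hGP hF z.2
        omega
    _ = Z.card * 6 := by rw [Finset.sum_const, smul_eq_mul]
    _ ≤ 25 := by omega

end AbsSq

namespace AbsSq

open scoped Classical

noncomputable def nu : ℝ × ℝ → ℝ × ℝ := fun q => (-q.1, -q.2)
noncomputable def sw : ℝ × ℝ → ℝ × ℝ := fun q => (q.2, q.1)

lemma nu_inj : Function.Injective nu := by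
  intro q q' h
  simp only [nu, Prod.mk.injEq, neg_inj] at h
  exact Prod.ext h.1 h.2

lemma sw_inj : Function.Injective sw := by
  intro q q' h
  simp only [sw, Prod.mk.injEq] at h
  exact Prod.ext h.2 h.1

lemma onL_nu {a c s : ℝ} {q : ℝ × ℝ} : onL a c s (nu q) ↔ onR (-(a+s)) (-(c+s)) s q := by
  simp only [onL, onR, nu]; constructor <;> rintro ⟨h1, h2, h3⟩ <;>
    refine ⟨by linarith, by linarith, by linarith⟩

lemma onR_nu {a c s : ℝ} {q : ℝ × ℝ} : onR a c s (nu q) ↔ onL (-(a+s)) (-(c+s)) s q := by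
  simp only [onL, onR, nu]; constructor <;> rintro ⟨h1, h2, h3⟩ <;>
    refine ⟨by linarith, by linarith, by linarith⟩

lemma onB_nu {a c s : ℝ} {q : ℝ × ℝ} : onB a c s (nu q) ↔ onT (-(a+s)) (-(c+s)) s q := by
  simp only [onB, onT, nu]; constructor <;> rintro ⟨h1, h2, h3⟩ <;>
    refine ⟨by linarith, by linarith, by linarith⟩

lemma onT_nu {a c s : ℝ} {q : ℝ × ℝ} : onT a c s (nu q) ↔ onB (-(a+s)) (-(c+s)) s q := by
  simp only [onB, onT, nu]; constructor <;> rintro ⟨h1, h2, h3⟩ <;>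
    refine ⟨by linarith, by linarith, by linarith⟩

lemma intr_nu {a c s : ℝ} {q : ℝ × ℝ} : intr a c s (nu q) ↔ intr (-(a+s)) (-(c+s)) s q := by
  simp only [intr, nu]; constructor <;> rintro ⟨h1, h2, h3, h4⟩ <;>
    refine ⟨by linarith, by linarith, by linarith, by linarith⟩

lemma onL_sw {a c s : ℝ} {q : ℝ × ℝ} : onL a c s (sw q) ↔ onB c a s q := Iff.rfl
lemma onB_sw {a c s : ℝ} {q : ℝ × ℝ} : onB a c s (sw q) ↔ onL c a s q := Iff.rfl
lemma onR_sw {a c s : ℝ} {q : ℝ × ℝ} : onR a c s (sw q) ↔ onT c a s q := Iff.rfl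
lemma onT_sw {a c s : ℝ} {q : ℝ × ℝ} : onT a c s (sw q) ↔ onR c a s q := Iff.rfl
lemma intr_sw {a c s : ℝ} {q : ℝ × ℝ} : intr a c s (sw q) ↔ intr c a s q := by
  simp only [intr, sw]; tauto

lemma filter_image_card {Q : Finset (ℝ × ℝ)} {g : ℝ × ℝ → ℝ × ℝ} (hg : Function.Injective g)
    (p : (ℝ × ℝ) → Prop) :
    ((Q.image g).filter p).card = (Q.filter (fun q => p (g q))).card := by
  classical
  rw [Finset.filter_image]
  exact Finset.card_image_of_injective _ hg

lemma cp_image_nu {Q : Finset (ℝ × ℝ)} {a c s : ℝ} :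
    cp (Q.image nu) a c s = cp Q (-(a+s)) (-(c+s)) s := by
  unfold cp
  rw [filter_image_card nu_inj, filter_image_card nu_inj, filter_image_card nu_inj,
    filter_image_card nu_inj]
  have e1 : Q.filter (fun q => onL a c s (nu q)) = Q.filter (onR (-(a+s)) (-(c+s)) s) := by
    apply Finset.filter_congr; intro q _; simp [onL_nu]
  have e2 : Q.filter (fun q => onR a c s (nu q)) = Q.filter (onL (-(a+s)) (-(c+s)) s) := by
    apply Finset.filter_congr; intro q _; simp [onR_nu]
  have e3 : Q.filter (fun q => onB a c s (nu q)) = Q.filter (onT (-(a+s)) (-(c+s)) s) := by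
    apply Finset.filter_congr; intro q _; simp [onB_nu]
  have e4 : Q.filter (fun q => onT a c s (nu q)) = Q.filter (onB (-(a+s)) (-(c+s)) s) := by
    apply Finset.filter_congr; intro q _; simp [onT_nu]
  rw [e1, e2, e3, e4]; ring

lemma cp_image_sw {Q : Finset (ℝ × ℝ)} {a c s : ℝ} :
    cp (Q.image sw) a c s = cp Q c a s := by
  unfold cp
  rw [filter_image_card sw_inj, filter_image_card sw_inj, filter_image_card sw_inj,
    filter_image_card sw_inj]
  have e1 : Q.filter (fun q => onL a c s (sw q)) = Q.filter (onB c a s) := rfl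
  have e2 : Q.filter (fun q => onR a c s (sw q)) = Q.filter (onT c a s) := rfl
  have e3 : Q.filter (fun q => onB a c s (sw q)) = Q.filter (onL c a s) := rfl
  have e4 : Q.filter (fun q => onT a c s (sw q)) = Q.filter (onR c a s) := rfl
  rw [e1, e2, e3, e4]; ring

lemma hGP_nu {Q : Finset (ℝ × ℝ)} (hGP : ∀ a c s : ℝ, 0 ≤ s → cp Q a c s ≤ 4) :
    ∀ a c s : ℝ, 0 ≤ s → cp (Q.image nu) a c s ≤ 4 := by
  intro a c s hs
  rw [cp_image_nu]; exact hGP _ _ _ hs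

lemma hGP_sw {Q : Finset (ℝ × ℝ)} (hGP : ∀ a c s : ℝ, 0 ≤ s → cp Q a c s ≤ 4) :
    ∀ a c s : ℝ, 0 ≤ s → cp (Q.image sw) a c s ≤ 4 := by
  intro a c s hs
  rw [cp_image_sw]; exact hGP _ _ _ hs

/-- squares sharing a right side line `u = a`; `x = (c, s)` encodes `[a-s, a] × [c, c+s]`. -/
def ConfR (Q : Finset (ℝ × ℝ)) (a m : ℝ) (F : Finset (ℝ × ℝ)) : Prop :=
  ∀ x ∈ F, 0 < x.2 ∧ x.1 ≤ m ∧ m ≤ x.1 + x.2 ∧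
    (∀ q ∈ Q, ¬ intr (a - x.2) x.1 x.2 q) ∧
    (∃ t ∈ Q, onT (a - x.2) x.1 x.2 t) ∧ (∃ b ∈ Q, onB (a - x.2) x.1 x.2 b)

/-- squares sharing a bottom side line `v = w`; `x = (a, s)` encodes `[a, a+s] × [w, w+s]`,
with left and right sides pinned. -/
def ConfB (Q : Finset (ℝ × ℝ)) (w m : ℝ) (F : Finset (ℝ × ℝ)) : Prop :=
  ∀ x ∈ F, 0 < x.2 ∧ x.1 ≤ m ∧ m ≤ x.1 + x.2 ∧
    (∀ q ∈ Q, ¬ intr x.1 w x.2 q) ∧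
    (∃ l ∈ Q, onL x.1 w x.2 l) ∧ (∃ r ∈ Q, onR x.1 w x.2 r)

/-- squares sharing a top side line `v = w`; `x = (a, s)` encodes `[a, a+s] × [w-s, w]`,
with left and right sides pinned. -/
def ConfT (Q : Finset (ℝ × ℝ)) (w m : ℝ) (F : Finset (ℝ × ℝ)) : Prop :=
  ∀ x ∈ F, 0 < x.2 ∧ x.1 ≤ m ∧ m ≤ x.1 + x.2 ∧
    (∀ q ∈ Q, ¬ intr x.1 (w - x.2) x.2 q) ∧
    (∃ l ∈ Q, onL x.1 (w - x.2) x.2 l) ∧ (∃ r ∈ Q, onR x.1 (w - x.2) x.2 r)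

lemma coreR {Q F : Finset (ℝ × ℝ)} {a m : ℝ}
    (hGP : ∀ a c s : ℝ, 0 ≤ s → cp Q a c s ≤ 4)
    (hF : ConfR Q a m F) : F.card ≤ 25 := by
  classical
  have hinj : Function.Injective (fun x : ℝ × ℝ => ((-(x.1 + x.2), x.2) : ℝ × ℝ)) := by
    intro x x' h
    simp only [Prod.mk.injEq] at h
    exact Prod.ext (by linarith [h.1, h.2]) h.2
  rw [← Finset.card_image_of_injective F hinj]
  refine coreL (hGP_nu hGP) (F := F.image _) (a := -a) (m := -m) ?_
  intro y hy
  obtain ⟨x, hxF, rfl⟩ := Finset.mem_image.mp hy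
  obtain ⟨c, s⟩ := x
  obtain ⟨hs, hm1, hm2, hemp, ⟨t, htQ, ⟨ht1, ht2, ht3⟩⟩, ⟨b, hbQ, ⟨hb1, hb2, hb3⟩⟩⟩ := hF (c, s) hxF
  simp only at hs hm1 hm2 hemp ht1 ht2 ht3 hb1 hb2 hb3
  refine ⟨hs, show -(c + s) ≤ -m by linarith, show -m ≤ -(c + s) + s by linarith, ?_, ?_, ?_⟩
  · intro q hq
    obtain ⟨q₀, hq₀Q, rfl⟩ := Finset.mem_image.mp hq
    intro h
    refine hemp q₀ hq₀Q ?_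
    obtain ⟨h1, h2, h3, h4⟩ := h
    simp only [nu, intr] at h1 h2 h3 h4 ⊢
    exact ⟨by linarith, by linarith, by linarith, by linarith⟩
  · refine ⟨nu b, Finset.mem_image_of_mem nu hbQ, ?_⟩
    simp only [nu, onT]
    exact ⟨by linarith, by linarith, by linarith⟩
  · refine ⟨nu t, Finset.mem_image_of_mem nu htQ, ?_⟩
    simp only [nu, onB]
    exact ⟨by linarith, by linarith, by linarith⟩

lemma coreB {Q F : Finset (ℝ × ℝ)} {w m : ℝ}
    (hGP : ∀ a c s : ℝ, 0 ≤ s → cp Q a c s ≤ 4)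
    (hF : ConfB Q w m F) : F.card ≤ 25 := by
  classical
  refine coreL (hGP_sw hGP) (F := F) (a := w) (m := m) ?_
  intro x hxF
  obtain ⟨hs, hm1, hm2, hemp, ⟨l, hlQ, hl⟩, ⟨r, hrQ, hr⟩⟩ := hF x hxF
  refine ⟨hs, hm1, hm2, ?_, ?_, ?_⟩
  · intro q hq
    obtain ⟨q₀, hq₀Q, rfl⟩ := Finset.mem_image.mp hq
    rw [intr_sw]
    exact hemp q₀ hq₀Q
  · exact ⟨sw r, Finset.mem_image_of_mem sw hrQ, onT_sw.mpr hr⟩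
  · exact ⟨sw l, Finset.mem_image_of_mem sw hlQ, onB_sw.mpr hl⟩

lemma coreT {Q F : Finset (ℝ × ℝ)} {w m : ℝ}
    (hGP : ∀ a c s : ℝ, 0 ≤ s → cp Q a c s ≤ 4)
    (hF : ConfT Q w m F) : F.card ≤ 25 := by
  classical
  refine coreR (hGP_sw hGP) (F := F) (a := w) (m := m) ?_
  intro x hxF
  obtain ⟨hs, hm1, hm2, hemp, ⟨l, hlQ, hl⟩, ⟨r, hrQ, hr⟩⟩ := hF x hxF
  refine ⟨hs, hm1, hm2, ?_, ?_, ?_⟩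
  · intro q hq
    obtain ⟨q₀, hq₀Q, rfl⟩ := Finset.mem_image.mp hq
    rw [show w - x.2 = (w - x.2) from rfl, intr_sw]
    exact hemp q₀ hq₀Q
  · exact ⟨sw r, Finset.mem_image_of_mem sw hrQ, onT_sw.mpr hr⟩
  · exact ⟨sw l, Finset.mem_image_of_mem sw hlQ, onB_sw.mpr hl⟩

end AbsSq

namespace Bridge

open AbsSq
open scoped Classical

noncomputable def rho (θ : ℝ) : ℝ × ℝ → ℝ × ℝ :=
  fun q => (q.1 * Real.cos θ + q.2 * Real.sin θ, q.2 * Real.cos θ - q.1 * Real.sin θ)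

noncomputable def rhoInv (θ : ℝ) : ℝ × ℝ → ℝ × ℝ :=
  fun w => (w.1 * Real.cos θ - w.2 * Real.sin θ, w.1 * Real.sin θ + w.2 * Real.cos θ)

lemma rho_rhoInv (θ : ℝ) (w : ℝ × ℝ) : rho θ (rhoInv θ w) = w := by
  have h := Real.sin_sq_add_cos_sq θ
  simp only [rho, rhoInv]
  refine Prod.ext ?_ ?_
  · show (w.1 * Real.cos θ - w.2 * Real.sin θ) * Real.cos θ +
      (w.1 * Real.sin θ + w.2 * Real.cos θ) * Real.sin θ = w.1
    linear_combination w.1 * h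
  · show (w.1 * Real.sin θ + w.2 * Real.cos θ) * Real.cos θ -
      (w.1 * Real.cos θ - w.2 * Real.sin θ) * Real.sin θ = w.2
    linear_combination w.2 * h

lemma rho_inj (θ : ℝ) : Function.Injective (rho θ) := by
  intro q q' he
  have h := Real.sin_sq_add_cos_sq θ
  rw [Prod.ext_iff] at he
  obtain ⟨h1, h2⟩ := he
  simp only [rho] at h1 h2
  refine Prod.ext ?_ ?_
  · linear_combination Real.cos θ * h1 - Real.sin θ * h2 + (q'.1 - q.1) * h
  · linear_combination Real.sin θ * h1 + Real.cos θ * h2 + (q'.2 - q.2) * h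

noncomputable def Ax (S : Square) : ℝ := (rho S.θ S.center).1 - S.r
noncomputable def Cy (S : Square) : ℝ := (rho S.θ S.center).2 - S.r

lemma lx_eq (S : Square) (q : ℝ × ℝ) :
    S.lx q = (rho S.θ q).1 - (rho S.θ S.center).1 := by
  simp only [Square.lx, rho]; ring

lemma ly_eq (S : Square) (q : ℝ × ℝ) :
    S.ly q = (rho S.θ q).2 - (rho S.θ S.center).2 := by
  simp only [Square.ly, rho]; ring

lemma rho_center_fst (S : Square) : (rho S.θ S.center).1 = Ax S + S.r := by
  simp [Ax]

lemma rho_center_snd (S : Square) : (rho S.θ S.center).2 = Cy S + S.r := by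
  simp [Cy]

lemma onSide_left_iff (S : Square) (q : ℝ × ℝ) :
    S.OnSide SqSide.left q ↔ onL (Ax S) (Cy S) (2 * S.r) (rho S.θ q) := by
  simp only [Square.OnSide, onL, lx_eq, ly_eq, Ax, Cy, abs_le]
  constructor
  · rintro ⟨h1, h2, h3⟩; exact ⟨by linarith, by linarith, by linarith⟩
  · rintro ⟨h1, h2, h3⟩; exact ⟨by linarith, by linarith, by linarith⟩

lemma onSide_right_iff (S : Square) (q : ℝ × ℝ) :
    S.OnSide SqSide.right q ↔ onR (Ax S) (Cy S) (2 * S.r) (rho S.θ q) := by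
  simp only [Square.OnSide, onR, lx_eq, ly_eq, Ax, Cy, abs_le]
  constructor
  · rintro ⟨h1, h2, h3⟩; exact ⟨by linarith, by linarith, by linarith⟩
  · rintro ⟨h1, h2, h3⟩; exact ⟨by linarith, by linarith, by linarith⟩

lemma onSide_bottom_iff (S : Square) (q : ℝ × ℝ) :
    S.OnSide SqSide.bottom q ↔ onB (Ax S) (Cy S) (2 * S.r) (rho S.θ q) := by
  simp only [Square.OnSide, onB, lx_eq, ly_eq, Ax, Cy, abs_le]
  constructor
  · rintro ⟨h1, h2, h3⟩; exact ⟨by linarith, by linarith, by linarith⟩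
  · rintro ⟨h1, h2, h3⟩; exact ⟨by linarith, by linarith, by linarith⟩

lemma onSide_top_iff (S : Square) (q : ℝ × ℝ) :
    S.OnSide SqSide.top q ↔ onT (Ax S) (Cy S) (2 * S.r) (rho S.θ q) := by
  simp only [Square.OnSide, onT, lx_eq, ly_eq, Ax, Cy, abs_le]
  constructor
  · rintro ⟨h1, h2, h3⟩; exact ⟨by linarith, by linarith, by linarith⟩
  · rintro ⟨h1, h2, h3⟩; exact ⟨by linarith, by linarith, by linarith⟩

lemma interior_iff (S : Square) (q : ℝ × ℝ) :
    S.InteriorMem q ↔ intr (Ax S) (Cy S) (2 * S.r) (rho S.θ q) := by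
  simp only [Square.InteriorMem, intr, lx_eq, ly_eq, Ax, Cy, abs_lt]
  constructor
  · rintro ⟨⟨h1, h2⟩, h3, h4⟩; exact ⟨by linarith, by linarith, by linarith, by linarith⟩
  · rintro ⟨h1, h2, h3, h4⟩; exact ⟨⟨by linarith, by linarith⟩, by linarith, by linarith⟩

lemma onSide_iff (S : Square) (σ : SqSide) (q : ℝ × ℝ) :
    S.OnSide σ q ↔ (match σ with
      | SqSide.left => onL (Ax S) (Cy S) (2 * S.r) (rho S.θ q)
      | SqSide.right => onR (Ax S) (Cy S) (2 * S.r) (rho S.θ q)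
      | SqSide.bottom => onB (Ax S) (Cy S) (2 * S.r) (rho S.θ q)
      | SqSide.top => onT (Ax S) (Cy S) (2 * S.r) (rho S.θ q)) := by
  cases σ
  · exact onSide_top_iff S q
  · exact onSide_right_iff S q
  · exact onSide_bottom_iff S q
  · exact onSide_left_iff S q

instance : Fintype SqSide where
  elems := {SqSide.top, SqSide.right, SqSide.bottom, SqSide.left}
  complete := by intro x; cases x <;> simp

/-- transfer of general position to the abstract contact-pair count -/
lemma hGPabs (P : Finset (ℝ × ℝ)) (hGen : GenPos P) (θ : ℝ) (hθ1 : 0 ≤ θ)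
    (hθ2 : θ < Real.pi / 2) :
    ∀ a c s : ℝ, 0 ≤ s → cp (P.image (rho θ)) a c s ≤ 4 := by
  intro a c s hs
  set S₀ : Square := ⟨rhoInv θ (a + s / 2, c + s / 2), s / 2, θ⟩ with hS₀
  have hvalid : S₀.Valid := ⟨by simp [hS₀]; linarith, hθ1, hθ2⟩
  have hθeq : S₀.θ = θ := rfl
  have hA : Ax S₀ = a := by
    simp only [Ax, hS₀, rho_rhoInv]; ring
  have hC : Cy S₀ = c := by
    simp only [Cy, hS₀, rho_rhoInv]; ring
  have hr : 2 * S₀.r = s := by simp [hS₀]; ring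
  have hcard := hGen S₀ hvalid
  set FP := (P ×ˢ (Finset.univ : Finset SqSide)).filter (fun pa => S₀.OnSide pa.2 pa.1) with hFP
  have hset : contactPairs P S₀ = ↑FP := by
    ext pa
    simp only [contactPairs, Set.mem_setOf_eq, hFP, Finset.coe_filter, Finset.mem_product,
      Finset.mem_univ, and_true]
  rw [hset, Set.ncard_coe_finset] at hcard
  have hfib : FP.card = ∑ σ ∈ (Finset.univ : Finset SqSide),
      (FP.filter (fun pa => pa.2 = σ)).card :=
    Finset.card_eq_sum_card_fiberwise (fun pa _ => Finset.mem_univ pa.2)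
  have hfe : ∀ σ : SqSide,
      (FP.filter (fun pa => pa.2 = σ)).card = (P.filter (fun q => S₀.OnSide σ q)).card := by
    intro σ
    have himg : FP.filter (fun pa => pa.2 = σ)
        = (P.filter (fun q => S₀.OnSide σ q)).image (fun q => (q, σ)) := by
      ext pa
      simp only [hFP, Finset.mem_filter, Finset.mem_product, Finset.mem_univ, true_and,
        Finset.mem_image, and_true]
      constructor
      · rintro ⟨⟨hp, hside⟩, hσ⟩
        exact ⟨pa.1, ⟨hp, by rw [← hσ]; exact hside⟩, by rw [← hσ]⟩
      · rintro ⟨q, ⟨hq, hside⟩, rfl⟩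
        exact ⟨⟨hq, hside⟩, rfl⟩
    rw [himg]
    exact Finset.card_image_of_injective _ (fun q q' h => (Prod.mk.injEq _ _ _ _ ▸ h : _ ∧ _).1)
  have huniv : (Finset.univ : Finset SqSide)
      = {SqSide.top, SqSide.right, SqSide.bottom, SqSide.left} := rfl
  rw [huniv, Finset.sum_insert (by decide), Finset.sum_insert (by decide),
    Finset.sum_insert (by decide), Finset.sum_singleton] at hfib
  rw [hfib] at hcard
  rw [hfe, hfe, hfe, hfe] at hcard
  -- now convert each filter over P to a filter over the image
  have key : ∀ (pd : (ℝ × ℝ) → Prop) (σ : SqSide),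
      (∀ q, S₀.OnSide σ q ↔ pd (rho θ q)) →
      ((P.image (rho θ)).filter pd).card = (P.filter (fun q => S₀.OnSide σ q)).card := by
    intro pd σ hiff
    rw [Finset.filter_image]
    rw [Finset.card_image_of_injective _ (rho_inj θ)]
    congr 1
    apply Finset.filter_congr
    intro q _
    simp [hiff q]
  unfold cp
  rw [key (onL a c s) SqSide.left (fun q => by rw [onSide_left_iff, hθeq, hA, hC, hr]),
    key (onR a c s) SqSide.right (fun q => by rw [onSide_right_iff, hθeq, hA, hC, hr]),
    key (onB a c s) SqSide.bottom (fun q => by rw [onSide_bottom_iff, hθeq, hA, hC, hr]),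
    key (onT a c s) SqSide.top (fun q => by rw [onSide_top_iff, hθeq, hA, hC, hr])]
  omega

end Bridge

section FinalAux

open AbsSq Bridge

lemma square_eq_of {S S' : Square} (h1 : S.center = S'.center) (h2 : S.r = S'.r)
    (h3 : S.θ = S'.θ) : S = S' := by
  cases S; cases S'; simp_all

lemma ncard_sides {s : Set SqSide} (hn : 3 ≤ s.ncard) :
    (SqSide.top ∈ s ∧ SqSide.bottom ∈ s ∧ (SqSide.left ∈ s ∨ SqSide.right ∈ s)) ∨
    (SqSide.left ∈ s ∧ SqSide.right ∈ s ∧ (SqSide.top ∈ s ∨ SqSide.bottom ∈ s)) := by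
  classical
  have hone : ∀ σ : SqSide, (s ∩ {σ}).ncard ≤ if σ ∈ s then 1 else 0 := by
    intro σ
    by_cases h : σ ∈ s
    · simp only [if_pos h]
      refine (Set.ncard_le_ncard Set.inter_subset_right (Set.toFinite _)).trans ?_
      simp [Set.ncard_singleton]
    · simp only [if_neg h]
      have he : s ∩ {σ} = ∅ := by
        ext x
        simp only [Set.mem_inter_iff, Set.mem_singleton_iff, Set.mem_empty_iff_false, iff_false,
          not_and]
        rintro hx rfl
        exact h hx
      simp [he]
  have hsub : s ⊆ (s ∩ {SqSide.top}) ∪ (s ∩ {SqSide.right}) ∪ (s ∩ {SqSide.bottom})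
      ∪ (s ∩ {SqSide.left}) := by
    intro x hx
    cases x <;> simp [hx]
  have hle := Set.ncard_le_ncard hsub (Set.toFinite _)
  have hu1 := Set.ncard_union_le ((s ∩ {SqSide.top}) ∪ (s ∩ {SqSide.right}) ∪ (s ∩ {SqSide.bottom}))
      (s ∩ {SqSide.left})
  have hu2 := Set.ncard_union_le ((s ∩ {SqSide.top}) ∪ (s ∩ {SqSide.right})) (s ∩ {SqSide.bottom})
  have hu3 := Set.ncard_union_le (s ∩ {SqSide.top}) (s ∩ {SqSide.right})
  have h1 := hone SqSide.top
  have h2 := hone SqSide.right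
  have h3 := hone SqSide.bottom
  have h4 := hone SqSide.left
  by_cases e1 : SqSide.top ∈ s <;> by_cases e2 : SqSide.right ∈ s <;>
    by_cases e3 : SqSide.bottom ∈ s <;> by_cases e4 : SqSide.left ∈ s <;>
    simp only [e1, e2, e3, e4, if_pos, if_neg, not_false_iff, if_true, if_false] at h1 h2 h3 h4 <;>
    first
      | exact Or.inl ⟨e1, e3, Or.inl e4⟩
      | exact Or.inl ⟨e1, e3, Or.inr e2⟩
      | exact Or.inr ⟨e4, e2, Or.inl e1⟩
      | exact Or.inr ⟨e4, e2, Or.inr e3⟩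
      | omega

end FinalAux

section Main

open AbsSq Bridge
open scoped Classical

/-- There is a constant `c > 0` such that for every finite set
`P` of `n` points in general position and every orientation `θ`, the number of
nondegenerate empty squares in orientation `θ` with at least three pinned sides
is at most `c * n`. -/
theorem num_threePinned_squares_le_linear :
    ∃ c : ℝ, 0 < c ∧
      ∀ P : Finset (ℝ × ℝ), GenPos P →
        ∀ θ : ℝ, 0 ≤ θ → θ < Real.pi / 2 →
          ∀ T : Finset Square,
            (∀ S ∈ T, S.θ = θ ∧ 0 < S.r ∧ IsEmptySquare P S ∧
              3 ≤ ({a : SqSide | ∃ p ∈ P, S.OnSide a p}).ncard) →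
            (T.card : ℝ) ≤ c * (P.card : ℝ) := by
    classical
  refine ⟨100, by norm_num, ?_⟩
  intro P hGen θ hθ1 hθ2 T hT
  have hGPa : ∀ a c s : ℝ, 0 ≤ s → cp (P.image (rho θ)) a c s ≤ 4 :=
    hGPabs P hGen θ hθ1 hθ2
  set f : Square → (ℝ × ℝ) × SqSide := fun S =>
    if h : (∃ z ∈ P, S.OnSide SqSide.top z) ∧ (∃ z ∈ P, S.OnSide SqSide.bottom z) ∧
        (∃ z ∈ P, S.OnSide SqSide.left z) then (h.2.2.choose, SqSide.left)
    else if h : (∃ z ∈ P, S.OnSide SqSide.top z) ∧ (∃ z ∈ P, S.OnSide SqSide.bottom z) ∧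
        (∃ z ∈ P, S.OnSide SqSide.right z) then (h.2.2.choose, SqSide.right)
    else if h : (∃ z ∈ P, S.OnSide SqSide.left z) ∧ (∃ z ∈ P, S.OnSide SqSide.right z) ∧
        (∃ z ∈ P, S.OnSide SqSide.top z) then (h.2.2.choose, SqSide.top)
    else if h : (∃ z ∈ P, S.OnSide SqSide.left z) ∧ (∃ z ∈ P, S.OnSide SqSide.right z) ∧
        (∃ z ∈ P, S.OnSide SqSide.bottom z) then (h.2.2.choose, SqSide.bottom)
    else ((0, 0), SqSide.top) with hf
  have hfspec : ∀ S ∈ T, (f S).1 ∈ P ∧ S.OnSide (f S).2 (f S).1 ∧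
      (((f S).2 = SqSide.left ∨ (f S).2 = SqSide.right) →
        (∃ z ∈ P, S.OnSide SqSide.top z) ∧ (∃ z ∈ P, S.OnSide SqSide.bottom z)) ∧
      (((f S).2 = SqSide.top ∨ (f S).2 = SqSide.bottom) →
        (∃ z ∈ P, S.OnSide SqSide.left z) ∧ (∃ z ∈ P, S.OnSide SqSide.right z)) := by
    intro S hS
    have hd := ncard_sides (s := {a : SqSide | ∃ p ∈ P, S.OnSide a p}) (hT S hS).2.2.2
    simp only [Set.mem_setOf_eq] at hd
    simp only [hf]
    split_ifs with h1 h2 h3 h4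
    · exact ⟨h1.2.2.choose_spec.1, h1.2.2.choose_spec.2,
        fun _ => ⟨h1.1, h1.2.1⟩, by rintro (h | h) <;> simp at h⟩
    · exact ⟨h2.2.2.choose_spec.1, h2.2.2.choose_spec.2,
        fun _ => ⟨h2.1, h2.2.1⟩, by rintro (h | h) <;> simp at h⟩
    · exact ⟨h3.2.2.choose_spec.1, h3.2.2.choose_spec.2,
        by rintro (h | h) <;> simp at h, fun _ => ⟨h3.1, h3.2.1⟩⟩
    · exact ⟨h4.2.2.choose_spec.1, h4.2.2.choose_spec.2,
        by rintro (h | h) <;> simp at h, fun _ => ⟨h4.1, h4.2.1⟩⟩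
    · exfalso
      rcases hd with ⟨ha, hb', hc | hc⟩ | ⟨ha, hb', hc | hc⟩
      · exact h1 ⟨ha, hb', hc⟩
      · exact h2 ⟨ha, hb', hc⟩
      · exact h3 ⟨ha, hb', hc⟩
      · exact h4 ⟨ha, hb', hc⟩
  have hfiber : ∀ b ∈ T.image f, (T.filter (fun S => f S = b)).card ≤ 25 := by
    intro b hb
    obtain ⟨S₁, hS₁T, rfl⟩ := Finset.mem_image.mp hb
    set z : ℝ × ℝ := (f S₁).1 with hzdef
    have hmem : ∀ S ∈ T.filter (fun S => f S = f S₁),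
        S ∈ T ∧ (f S).1 = z ∧ (f S).2 = (f S₁).2 := by
      intro S hS
      obtain ⟨h1, h2⟩ := Finset.mem_filter.mp hS
      exact ⟨h1, by rw [h2], by rw [h2]⟩
    cases hσ : (f S₁).2 with
    | left =>
      have key : ∀ S ∈ T.filter (fun S => f S = f S₁),
          S.θ = θ ∧ 0 < S.r ∧ (∀ q ∈ P, ¬ S.InteriorMem q) ∧
          Ax S = (rho θ z).1 ∧ Cy S ≤ (rho θ z).2 ∧ (rho θ z).2 ≤ Cy S + 2 * S.r ∧
          (∃ t ∈ P, S.OnSide SqSide.top t) ∧ (∃ bb ∈ P, S.OnSide SqSide.bottom bb) := by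
        intro S hS'
        obtain ⟨hST, hf1, hf2⟩ := hmem S hS'
        obtain ⟨hθS, hrS, hES, _⟩ := hT S hST
        obtain ⟨hzP, hOn, hc1, hc2⟩ := hfspec S hST
        rw [hf1, hf2, hσ] at hOn
        have honl := (onSide_left_iff S z).mp hOn
        rw [hθS] at honl
        obtain ⟨e1, e2, e3⟩ := honl
        exact ⟨hθS, hrS, hES.2, e1.symm, e2, e3,
          (hc1 (Or.inl (hf2.trans hσ))).1, (hc1 (Or.inl (hf2.trans hσ))).2⟩
      have hinj : Set.InjOn (fun S => ((Cy S, 2 * S.r) : ℝ × ℝ))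
          ↑(T.filter (fun S => f S = f S₁)) := by
        intro S hS' S' hS'' he
        obtain ⟨hθS, hrS, _, e1, _, _, _, _⟩ := key S (Finset.mem_coe.mp hS')
        obtain ⟨hθS', hrS', _, e1', _, _, _, _⟩ := key S' (Finset.mem_coe.mp hS'')
        simp only [Prod.mk.injEq] at he
        obtain ⟨hC, hr2⟩ := he
        have hr : S.r = S'.r := by linarith
        have hA : Ax S = Ax S' := by rw [e1, e1']
        have hcen : rho θ S.center = rho θ S'.center := by
          have d1 : (rho θ S.center).1 = Ax S + S.r := by rw [← hθS]; exact rho_center_fst S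
          have d2 : (rho θ S'.center).1 = Ax S' + S'.r := by rw [← hθS']; exact rho_center_fst S'
          have d3 : (rho θ S.center).2 = Cy S + S.r := by rw [← hθS]; exact rho_center_snd S
          have d4 : (rho θ S'.center).2 = Cy S' + S'.r := by rw [← hθS']; exact rho_center_snd S'
          refine Prod.ext ?_ ?_
          · rw [d1, d2, hA, hr]
          · rw [d3, d4, hC, hr]
        exact square_eq_of (rho_inj θ hcen) hr (hθS.trans hθS'.symm)
      rw [← Finset.card_image_of_injOn hinj]
      refine coreL (Q := P.image (rho θ)) (a := (rho θ z).1) (m := (rho θ z).2) hGPa ?_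
      intro x hx
      obtain ⟨S, hS', rfl⟩ := Finset.mem_image.mp hx
      obtain ⟨hθS, hrS, hEmp, e1, e2, e3, ⟨t, htP, htOn⟩, ⟨bb, hbP, hbOn⟩⟩ := key S hS'
      dsimp only
      refine ⟨by linarith, e2, e3, ?_, ?_, ?_⟩
      · intro q' hq'
        obtain ⟨q, hqP, rfl⟩ := Finset.mem_image.mp hq'
        intro hintr
        refine hEmp q hqP ((interior_iff S q).mpr ?_)
        rw [hθS, e1]
        exact hintr
      · refine ⟨rho θ t, Finset.mem_image_of_mem _ htP, ?_⟩
        have h := (onSide_top_iff S t).mp htOn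
        rw [hθS] at h
        rw [← e1]
        exact h
      · refine ⟨rho θ bb, Finset.mem_image_of_mem _ hbP, ?_⟩
        have h := (onSide_bottom_iff S bb).mp hbOn
        rw [hθS] at h
        rw [← e1]
        exact h
    | right =>
      have key : ∀ S ∈ T.filter (fun S => f S = f S₁),
          S.θ = θ ∧ 0 < S.r ∧ (∀ q ∈ P, ¬ S.InteriorMem q) ∧
          (rho θ z).1 = Ax S + 2 * S.r ∧ Cy S ≤ (rho θ z).2 ∧ (rho θ z).2 ≤ Cy S + 2 * S.r ∧
          (∃ t ∈ P, S.OnSide SqSide.top t) ∧ (∃ bb ∈ P, S.OnSide SqSide.bottom bb) := by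
        intro S hS'
        obtain ⟨hST, hf1, hf2⟩ := hmem S hS'
        obtain ⟨hθS, hrS, hES, _⟩ := hT S hST
        obtain ⟨hzP, hOn, hc1, hc2⟩ := hfspec S hST
        rw [hf1, hf2, hσ] at hOn
        have honr := (onSide_right_iff S z).mp hOn
        rw [hθS] at honr
        obtain ⟨e1, e2, e3⟩ := honr
        exact ⟨hθS, hrS, hES.2, e1, e2, e3,
          (hc1 (Or.inr (hf2.trans hσ))).1, (hc1 (Or.inr (hf2.trans hσ))).2⟩
      have hinj : Set.InjOn (fun S => ((Cy S, 2 * S.r) : ℝ × ℝ))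
          ↑(T.filter (fun S => f S = f S₁)) := by
        intro S hS' S' hS'' he
        obtain ⟨hθS, hrS, _, e1, _, _, _, _⟩ := key S (Finset.mem_coe.mp hS')
        obtain ⟨hθS', hrS', _, e1', _, _, _, _⟩ := key S' (Finset.mem_coe.mp hS'')
        simp only [Prod.mk.injEq] at he
        obtain ⟨hC, hr2⟩ := he
        have hr : S.r = S'.r := by linarith
        have hA : Ax S = Ax S' := by linarith
        have hcen : rho θ S.center = rho θ S'.center := by
          have d1 : (rho θ S.center).1 = Ax S + S.r := by rw [← hθS]; exact rho_center_fst S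
          have d2 : (rho θ S'.center).1 = Ax S' + S'.r := by rw [← hθS']; exact rho_center_fst S'
          have d3 : (rho θ S.center).2 = Cy S + S.r := by rw [← hθS]; exact rho_center_snd S
          have d4 : (rho θ S'.center).2 = Cy S' + S'.r := by rw [← hθS']; exact rho_center_snd S'
          refine Prod.ext ?_ ?_
          · rw [d1, d2, hA, hr]
          · rw [d3, d4, hC, hr]
        exact square_eq_of (rho_inj θ hcen) hr (hθS.trans hθS'.symm)
      rw [← Finset.card_image_of_injOn hinj]
      refine coreR (Q := P.image (rho θ)) (a := (rho θ z).1) (m := (rho θ z).2) hGPa ?_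
      intro x hx
      obtain ⟨S, hS', rfl⟩ := Finset.mem_image.mp hx
      obtain ⟨hθS, hrS, hEmp, e1, e2, e3, ⟨t, htP, htOn⟩, ⟨bb, hbP, hbOn⟩⟩ := key S hS'
      dsimp only
      have e1' : (rho θ z).1 - 2 * S.r = Ax S := by linarith
      refine ⟨by linarith, e2, e3, ?_, ?_, ?_⟩
      · intro q' hq'
        obtain ⟨q, hqP, rfl⟩ := Finset.mem_image.mp hq'
        intro hintr
        refine hEmp q hqP ((interior_iff S q).mpr ?_)
        rw [hθS, ← e1']
        exact hintr
      · refine ⟨rho θ t, Finset.mem_image_of_mem _ htP, ?_⟩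
        have h := (onSide_top_iff S t).mp htOn
        rw [hθS] at h
        rw [e1']
        exact h
      · refine ⟨rho θ bb, Finset.mem_image_of_mem _ hbP, ?_⟩
        have h := (onSide_bottom_iff S bb).mp hbOn
        rw [hθS] at h
        rw [e1']
        exact h
    | bottom =>
      have key : ∀ S ∈ T.filter (fun S => f S = f S₁),
          S.θ = θ ∧ 0 < S.r ∧ (∀ q ∈ P, ¬ S.InteriorMem q) ∧
          (rho θ z).2 = Cy S ∧ Ax S ≤ (rho θ z).1 ∧ (rho θ z).1 ≤ Ax S + 2 * S.r ∧
          (∃ l ∈ P, S.OnSide SqSide.left l) ∧ (∃ rr ∈ P, S.OnSide SqSide.right rr) := by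
        intro S hS'
        obtain ⟨hST, hf1, hf2⟩ := hmem S hS'
        obtain ⟨hθS, hrS, hES, _⟩ := hT S hST
        obtain ⟨hzP, hOn, hc1, hc2⟩ := hfspec S hST
        rw [hf1, hf2, hσ] at hOn
        have honb := (onSide_bottom_iff S z).mp hOn
        rw [hθS] at honb
        obtain ⟨e1, e2, e3⟩ := honb
        exact ⟨hθS, hrS, hES.2, e1, e2, e3,
          (hc2 (Or.inr (hf2.trans hσ))).1, (hc2 (Or.inr (hf2.trans hσ))).2⟩
      have hinj : Set.InjOn (fun S => ((Ax S, 2 * S.r) : ℝ × ℝ))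
          ↑(T.filter (fun S => f S = f S₁)) := by
        intro S hS' S' hS'' he
        obtain ⟨hθS, hrS, _, e1, _, _, _, _⟩ := key S (Finset.mem_coe.mp hS')
        obtain ⟨hθS', hrS', _, e1', _, _, _, _⟩ := key S' (Finset.mem_coe.mp hS'')
        simp only [Prod.mk.injEq] at he
        obtain ⟨hA, hr2⟩ := he
        have hr : S.r = S'.r := by linarith
        have hC : Cy S = Cy S' := by rw [← e1, ← e1']
        have hcen : rho θ S.center = rho θ S'.center := by
          have d1 : (rho θ S.center).1 = Ax S + S.r := by rw [← hθS]; exact rho_center_fst S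
          have d2 : (rho θ S'.center).1 = Ax S' + S'.r := by rw [← hθS']; exact rho_center_fst S'
          have d3 : (rho θ S.center).2 = Cy S + S.r := by rw [← hθS]; exact rho_center_snd S
          have d4 : (rho θ S'.center).2 = Cy S' + S'.r := by rw [← hθS']; exact rho_center_snd S'
          refine Prod.ext ?_ ?_
          · rw [d1, d2, hA, hr]
          · rw [d3, d4, hC, hr]
        exact square_eq_of (rho_inj θ hcen) hr (hθS.trans hθS'.symm)
      rw [← Finset.card_image_of_injOn hinj]
      refine coreB (Q := P.image (rho θ)) (w := (rho θ z).2) (m := (rho θ z).1) hGPa ?_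
      intro x hx
      obtain ⟨S, hS', rfl⟩ := Finset.mem_image.mp hx
      obtain ⟨hθS, hrS, hEmp, e1, e2, e3, ⟨l, hlP, hlOn⟩, ⟨rr, hrP, hrOn⟩⟩ := key S hS'
      dsimp only
      refine ⟨by linarith, e2, e3, ?_, ?_, ?_⟩
      · intro q' hq'
        obtain ⟨q, hqP, rfl⟩ := Finset.mem_image.mp hq'
        intro hintr
        refine hEmp q hqP ((interior_iff S q).mpr ?_)
        rw [hθS, ← e1]
        exact hintr
      · refine ⟨rho θ l, Finset.mem_image_of_mem _ hlP, ?_⟩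
        have h := (onSide_left_iff S l).mp hlOn
        rw [hθS] at h
        rw [e1]
        exact h
      · refine ⟨rho θ rr, Finset.mem_image_of_mem _ hrP, ?_⟩
        have h := (onSide_right_iff S rr).mp hrOn
        rw [hθS] at h
        rw [e1]
        exact h
    | top =>
      have key : ∀ S ∈ T.filter (fun S => f S = f S₁),
          S.θ = θ ∧ 0 < S.r ∧ (∀ q ∈ P, ¬ S.InteriorMem q) ∧
          (rho θ z).2 = Cy S + 2 * S.r ∧ Ax S ≤ (rho θ z).1 ∧ (rho θ z).1 ≤ Ax S + 2 * S.r ∧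
          (∃ l ∈ P, S.OnSide SqSide.left l) ∧ (∃ rr ∈ P, S.OnSide SqSide.right rr) := by
        intro S hS'
        obtain ⟨hST, hf1, hf2⟩ := hmem S hS'
        obtain ⟨hθS, hrS, hES, _⟩ := hT S hST
        obtain ⟨hzP, hOn, hc1, hc2⟩ := hfspec S hST
        rw [hf1, hf2, hσ] at hOn
        have hont := (onSide_top_iff S z).mp hOn
        rw [hθS] at hont
        obtain ⟨e1, e2, e3⟩ := hont
        exact ⟨hθS, hrS, hES.2, e1, e2, e3,
          (hc2 (Or.inl (hf2.trans hσ))).1, (hc2 (Or.inl (hf2.trans hσ))).2⟩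
      have hinj : Set.InjOn (fun S => ((Ax S, 2 * S.r) : ℝ × ℝ))
          ↑(T.filter (fun S => f S = f S₁)) := by
        intro S hS' S' hS'' he
        obtain ⟨hθS, hrS, _, e1, _, _, _, _⟩ := key S (Finset.mem_coe.mp hS')
        obtain ⟨hθS', hrS', _, e1', _, _, _, _⟩ := key S' (Finset.mem_coe.mp hS'')
        simp only [Prod.mk.injEq] at he
        obtain ⟨hA, hr2⟩ := he
        have hr : S.r = S'.r := by linarith
        have hC : Cy S = Cy S' := by linarith
        have hcen : rho θ S.center = rho θ S'.center := by
          have d1 : (rho θ S.center).1 = Ax S + S.r := by rw [← hθS]; exact rho_center_fst S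
          have d2 : (rho θ S'.center).1 = Ax S' + S'.r := by rw [← hθS']; exact rho_center_fst S'
          have d3 : (rho θ S.center).2 = Cy S + S.r := by rw [← hθS]; exact rho_center_snd S
          have d4 : (rho θ S'.center).2 = Cy S' + S'.r := by rw [← hθS']; exact rho_center_snd S'
          refine Prod.ext ?_ ?_
          · rw [d1, d2, hA, hr]
          · rw [d3, d4, hC, hr]
        exact square_eq_of (rho_inj θ hcen) hr (hθS.trans hθS'.symm)
      rw [← Finset.card_image_of_injOn hinj]
      refine coreT (Q := P.image (rho θ)) (w := (rho θ z).2) (m := (rho θ z).1) hGPa ?_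
      intro x hx
      obtain ⟨S, hS', rfl⟩ := Finset.mem_image.mp hx
      obtain ⟨hθS, hrS, hEmp, e1, e2, e3, ⟨l, hlP, hlOn⟩, ⟨rr, hrP, hrOn⟩⟩ := key S hS'
      dsimp only
      have e1' : (rho θ z).2 - 2 * S.r = Cy S := by linarith
      refine ⟨by linarith, e2, e3, ?_, ?_, ?_⟩
      · intro q' hq'
        obtain ⟨q, hqP, rfl⟩ := Finset.mem_image.mp hq'
        intro hintr
        refine hEmp q hqP ((interior_iff S q).mpr ?_)
        rw [hθS, ← e1']
        exact hintr
      · refine ⟨rho θ l, Finset.mem_image_of_mem _ hlP, ?_⟩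
        have h := (onSide_left_iff S l).mp hlOn
        rw [hθS] at h
        rw [e1']
        exact h
      · refine ⟨rho θ rr, Finset.mem_image_of_mem _ hrP, ?_⟩
        have h := (onSide_right_iff S rr).mp hrOn
        rw [hθS] at h
        rw [e1']
        exact h
  have h1 : T.card ≤ 25 * (T.image f).card :=
    Finset.card_le_mul_card_image T 25 hfiber
  have hsubP : T.image f ⊆ P ×ˢ (Finset.univ : Finset SqSide) := by
    intro b hb
    obtain ⟨S, hS, rfl⟩ := Finset.mem_image.mp hb
    exact Finset.mem_product.mpr ⟨(hfspec S hS).1, Finset.mem_univ _⟩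
  have h2 : (T.image f).card ≤ 4 * P.card := by
    refine (Finset.card_le_card hsubP).trans ?_
    have h4 : (Finset.univ : Finset SqSide).card = 4 := rfl
    rw [Finset.card_product, h4]
    omega
  have h3 : T.card ≤ 100 * P.card := by omega
  calc (T.card : ℝ) ≤ ((100 * P.card : ℕ) : ℝ) := by exact_mod_cast h3
    _ = 100 * (P.card : ℝ) := by push_cast; ring

end Main
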